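/- (Dehn–Sommerville relations for reciprocal complexes, f-version.) Let Δ be a reciprocal simplicial complex of dimension d−1. Then for every k with 1 ≤ k ≤ d: f_{k−1} = ∑_{i=k}^d (−1)^{d−i} · binomial(i, k) · f^int_{i−1}. -/

import Mathlib

open Polynomial Finset

lemma neg_pow_sub_eq {d j : ℕ} (h : j ≤ d) : (-1:ℤ)^(d-j) = (-1)^d * (-1)^j := by
  have h1 : (-1:ℤ)^(d-j) * (-1)^j = (-1)^d := by rw [← pow_add, Nat.sub_add_cancel h]
  have h2 : ((-1:ℤ)^j) * ((-1)^j) = 1 := by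
    rw [← pow_add, ← two_mul]; exact (even_two_mul j).neg_one_pow
  calc (-1:ℤ)^(d-j) = (-1)^(d-j) * ((-1)^j * (-1)^j) := by rw [h2, mul_one]
    _ = ((-1)^(d-j) * (-1)^j) * (-1)^j := by ring
    _ = (-1)^d * (-1)^j := by rw [h1]

lemma aux1 (m k : ℕ) (hk : 1 ≤ k) :
    ∑ j ∈ range (m+1), ((m.choose j : ℤ) * (-1)^j * (j.choose k))
      = if m = k then (-1:ℤ)^k else 0 := by
  by_cases hkm : k ≤ m
  · have hsplit : ∑ j ∈ range (m+1), ((m.choose j : ℤ) * (-1)^j * (j.choose k))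
        = ∑ j ∈ Ico 0 k, ((m.choose j : ℤ) * (-1)^j * (j.choose k))
          + ∑ j ∈ Ico k (m+1), ((m.choose j : ℤ) * (-1)^j * (j.choose k)) := by
      rw [range_eq_Ico, ← sum_Ico_consecutive _ (Nat.zero_le k) (by omega)]
    have h0 : ∑ j ∈ Ico 0 k, ((m.choose j : ℤ) * (-1)^j * (j.choose k)) = 0 := by
      apply sum_eq_zero; intro j hj
      rw [mem_Ico] at hj
      rw [Nat.choose_eq_zero_of_lt hj.2]; simp
    have h2 : ∑ j ∈ Ico k (m+1), ((m.choose j : ℤ) * (-1)^j * (j.choose k))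
        = ∑ t ∈ range (m+1-k), ((m.choose (k+t) : ℤ) * (-1)^(k+t) * ((k+t).choose k)) := by
      rw [sum_Ico_eq_sum_range]
    have h3 : ∀ t ∈ range (m+1-k), ((m.choose (k+t) : ℤ) * (-1)^(k+t) * ((k+t).choose k))
        = (m.choose k : ℤ) * (-1)^k * ((-1)^t * ((m-k).choose t)) := by
      intro t ht
      rw [mem_range] at ht
      have hle : k + t ≤ m := by omega
      have := Nat.choose_mul (n := m) (Nat.le_add_right k t)
      have h4 : (m.choose (k+t) : ℤ) * ((k+t).choose k) = (m.choose k : ℤ) * ((m-k).choose (k+t-k)) := by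
        exact_mod_cast congrArg (Nat.cast : ℕ → ℤ) this
      rw [pow_add]
      calc (m.choose (k+t) : ℤ) * ((-1)^k * (-1)^t) * ((k+t).choose k)
          = ((m.choose (k+t) : ℤ) * ((k+t).choose k)) * ((-1)^k * (-1)^t) := by ring
        _ = ((m.choose k : ℤ) * ((m-k).choose (k+t-k))) * ((-1)^k * (-1)^t) := by rw [h4]
        _ = (m.choose k : ℤ) * (-1)^k * ((-1)^t * ((m-k).choose t)) := by
            rw [Nat.add_sub_cancel_left]; ring
    rw [hsplit, h0, zero_add, h2, sum_congr rfl h3, ← mul_sum]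
    have : m + 1 - k = (m - k) + 1 := by omega
    rw [this, Int.alternating_sum_range_choose]
    by_cases hmk : m = k
    · subst hmk; simp
    · have : m - k ≠ 0 := by omega
      rw [if_neg this, if_neg hmk, mul_zero]
  · rw [if_neg (by omega)]
    apply sum_eq_zero; intro j hj
    rw [mem_range] at hj
    rw [show j.choose k = 0 from Nat.choose_eq_zero_of_lt (by omega)]; simp

lemma aux2 {V : Type*} [DecidableEq V] (H : Finset V) (d k : ℕ) (hk : 1 ≤ k)
    (hH : H.card ≤ d) :
    ∑ F ∈ H.powerset, (-1:ℤ)^(d - F.card) * (F.card.choose k)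
      = if H.card = k then (-1:ℤ)^(d+k) else 0 := by
  rw [Finset.sum_powerset_apply_card (fun j => (-1:ℤ)^(d - j) * (j.choose k))]
  have step : ∀ j ∈ range (H.card + 1),
      (H.card.choose j) • ((-1:ℤ)^(d - j) * (j.choose k))
        = (-1:ℤ)^d * ((H.card.choose j : ℤ) * (-1)^j * (j.choose k)) := by
    intro j hj
    rw [mem_range] at hj
    rw [nsmul_eq_mul, neg_pow_sub_eq (show j ≤ d by omega)]
    ring
  rw [sum_congr rfl step, ← mul_sum, aux1 _ _ hk]
  by_cases h : H.card = k
  · rw [if_pos h, if_pos h, ← pow_add]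
  · rw [if_neg h, if_neg h, mul_zero]


/-- A (finite, abstract) simplicial complex: a finite collection of finite subsets of `V`
containing the empty set and closed under taking subsets. -/
def IsSimplicialComplex {V : Type*} [DecidableEq V] (Δ : Finset (Finset V)) : Prop :=
  ∅ ∈ Δ ∧ ∀ F ∈ Δ, ∀ G ⊆ F, G ∈ Δ

/-- `Δ` has dimension `d - 1`: every face has at most `d` elements and some face has
exactly `d` elements. -/
def HasDimension {V : Type*} [DecidableEq V] (Δ : Finset (Finset V)) (d : ℕ) : Prop :=
  (∀ F ∈ Δ, F.card ≤ d) ∧ ∃ F ∈ Δ, F.card = d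

/-- `fnum Δ i` is the number of faces of `Δ` with exactly `i` elements, i.e. `f_{i-1}`. -/
def fnum {V : Type*} [DecidableEq V] (Δ : Finset (Finset V)) (i : ℕ) : ℕ :=
  (Δ.filter fun F => F.card = i).card

/-- The multiplicity `m_F = ∑_{G ∈ Δ, F ⊆ G} (−1)^{d−|G|}` of a face `F` of a complex of
dimension `d − 1` (all faces `G` satisfy `|G| ≤ d`, so `d - G.card` is the usual subtraction). -/
def mult {V : Type*} [DecidableEq V] (Δ : Finset (Finset V)) (d : ℕ) (F : Finset V) : ℤ :=
  ∑ G ∈ Δ.filter (fun G => F ⊆ G), (-1 : ℤ) ^ (d - G.card)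

/-- The reduced Euler characteristic `χ̃(Γ) = ∑_{G ∈ Γ} (−1)^{|G|−1}`; the exponent is
written `|G| + 1`, which has the same parity as `|G| − 1` (the empty face contributes `−1`). -/
def chiTilde {V : Type*} [DecidableEq V] (Γ : Finset (Finset V)) : ℤ :=
  ∑ G ∈ Γ, (-1 : ℤ) ^ (G.card + 1)

/-- The link of a face `F` in `Δ`. -/
def link {V : Type*} [DecidableEq V] (Δ : Finset (Finset V)) (F : Finset V) :
    Finset (Finset V) :=
  Δ.filter fun G => G ∩ F = ∅ ∧ G ∪ F ∈ Δ

/-- `Δ` (of dimension `d − 1`) is reciprocal if `m_F ∈ {0, 1}` for every nonempty face. -/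
def IsReciprocal {V : Type*} [DecidableEq V] (Δ : Finset (Finset V)) (d : ℕ) : Prop :=
  ∀ F ∈ Δ, F ≠ ∅ → mult Δ d F = 0 ∨ mult Δ d F = 1

/-- `Δ` (of dimension `d − 1`) is semi-Eulerian if `m_F = 1` for every nonempty face. -/
def IsSemiEulerian {V : Type*} [DecidableEq V] (Δ : Finset (Finset V)) (d : ℕ) : Prop :=
  ∀ F ∈ Δ, F ≠ ∅ → mult Δ d F = 1

/-- `fint Δ d i` is the number of interior faces (nonempty faces with `m_F = 1`) of `Δ`
with exactly `i` elements, i.e. `f^int_{i-1}`. -/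
def fint {V : Type*} [DecidableEq V] (Δ : Finset (Finset V)) (d : ℕ) (i : ℕ) : ℕ :=
  (Δ.filter fun F => F.card = i ∧ F ≠ ∅ ∧ mult Δ d F = 1).card

/-- Dehn–Sommerville relations for reciprocal complexes, f-version:
`f_{k−1} = ∑_{i=k}^d (−1)^{d−i} C(i,k) f^int_{i−1}` for `1 ≤ k ≤ d`. -/
theorem DS_reciprocal_f_version {V : Type*} [DecidableEq V] (Δ : Finset (Finset V)) (d : ℕ)
    (hd : 1 ≤ d) (hΔ : IsSimplicialComplex Δ) (hdim : HasDimension Δ d)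
    (hrec : IsReciprocal Δ d) :
    ∀ k, 1 ≤ k → k ≤ d →
      (fnum Δ k : ℤ)
        = ∑ i ∈ Icc k d, (-1 : ℤ) ^ (d - i) * (i.choose k : ℤ) * (fint Δ d i : ℤ) := by
  intro k hk1 hkd
  symm
  -- g is the summand per face
  have hfint : ∀ i, (fint Δ d i : ℤ)
      = ∑ F ∈ Δ.filter (fun F => F ≠ ∅ ∧ F.card = i), mult Δ d F := by
    intro i
    have hterm : ∀ F ∈ Δ.filter (fun F => F ≠ ∅ ∧ F.card = i),
        mult Δ d F = if (F.card = i ∧ F ≠ ∅ ∧ mult Δ d F = 1) then (1:ℤ) else 0 := by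
      intro F hF
      rw [mem_filter] at hF
      rcases hrec F hF.1 hF.2.1 with h | h
      · rw [h, if_neg]
        rintro ⟨-, -, h1⟩
        omega
      · rw [if_pos ⟨hF.2.2, hF.2.1, h⟩]
        exact h
    rw [sum_congr rfl hterm, sum_boole, fint]
    congr 2
    ext F
    simp only [mem_filter]
    tauto
  have key : ∀ i, (-1:ℤ)^(d-i) * (i.choose k) * (fint Δ d i)
      = ∑ F ∈ Δ.filter (fun F => F ≠ ∅ ∧ F.card = i),
          (-1:ℤ)^(d - F.card) * (F.card.choose k) * mult Δ d F := by
    intro i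
    rw [hfint i, mul_sum]
    apply sum_congr rfl
    intro F hF
    rw [mem_filter] at hF
    rw [hF.2.2]
  rw [sum_congr rfl (fun i _ => key i)]
  -- extend Icc k d to Icc 1 d
  rw [sum_subset (Icc_subset_Icc hk1 le_rfl)
      (by
        intro i hi hni
        rw [mem_Icc] at hi
        rw [mem_Icc] at hni
        apply sum_eq_zero
        intro F hF
        rw [mem_filter] at hF
        rw [hF.2.2, show i.choose k = 0 from Nat.choose_eq_zero_of_lt (by omega)]
        simp)]
  -- fiberwise sum over card
  have hfiber : ∑ i ∈ Icc 1 d, ∑ F ∈ Δ.filter (fun F => F ≠ ∅ ∧ F.card = i),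
        (-1:ℤ)^(d - F.card) * (F.card.choose k) * mult Δ d F
      = ∑ F ∈ Δ.filter (fun F => F ≠ ∅),
          (-1:ℤ)^(d - F.card) * (F.card.choose k) * mult Δ d F := by
    have := Finset.sum_fiberwise_of_maps_to (s := Δ.filter (fun F => F ≠ ∅))
      (t := Icc 1 d) (g := fun F => Finset.card F)
      (f := fun F => (-1:ℤ)^(d - F.card) * (F.card.choose k) * mult Δ d F)
      (by
        intro F hF
        rw [mem_filter] at hF
        rw [mem_Icc]
        exact ⟨Finset.one_le_card.2 (Finset.nonempty_iff_ne_empty.2 hF.2), hdim.1 F hF.1⟩)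
    rw [← this]
    apply sum_congr rfl
    intro i _
    apply sum_congr _ (fun _ _ => rfl)
    rw [filter_filter]
  rw [hfiber]
  -- expand mult and swap
  have hswap : ∑ F ∈ Δ.filter (fun F => F ≠ ∅),
        (-1:ℤ)^(d - F.card) * (F.card.choose k) * mult Δ d F
      = ∑ H ∈ Δ, ∑ F ∈ Δ.filter (fun F => F ≠ ∅),
          (if F ⊆ H then (-1:ℤ)^(d - F.card) * (F.card.choose k) * (-1)^(d - H.card) else 0) := by
    rw [Finset.sum_comm]
    apply sum_congr rfl
    intro F _
    rw [mult, ← Finset.sum_filter]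
    rw [Finset.mul_sum]
  rw [hswap]
  have hinner : ∀ H ∈ Δ, ∑ F ∈ Δ.filter (fun F => F ≠ ∅),
        (if F ⊆ H then (-1:ℤ)^(d - F.card) * (F.card.choose k) * (-1)^(d - H.card) else 0)
      = if H.card = k then (1:ℤ) else 0 := by
    intro H hH
    rw [← Finset.sum_filter]
    have hset : (Δ.filter (fun F => F ≠ ∅)).filter (fun F => F ⊆ H)
        = H.powerset.filter (fun F => F ≠ ∅) := by
      ext F
      simp only [mem_filter, mem_powerset]
      constructor
      · rintro ⟨⟨_, hne⟩, hsub⟩; exact ⟨hsub, hne⟩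
      · rintro ⟨hsub, hne⟩; exact ⟨⟨hΔ.2 H hH F hsub, hne⟩, hsub⟩
    rw [hset]
    have hzero : ∑ F ∈ H.powerset.filter (fun F => ¬ F ≠ ∅),
        ((-1:ℤ)^(d-F.card) * (F.card.choose k) * (-1)^(d-H.card)) = 0 := by
      apply sum_eq_zero
      intro F hF
      rw [mem_filter] at hF
      have hFe : F = ∅ := not_ne_iff.mp hF.2
      subst hFe
      rw [Finset.card_empty, show Nat.choose 0 k = 0 from Nat.choose_eq_zero_of_lt (by omega)]
      simp
    have hfull : ∑ F ∈ H.powerset.filter (fun F => F ≠ ∅),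
          ((-1:ℤ)^(d-F.card) * (F.card.choose k) * (-1)^(d-H.card))
        = ∑ F ∈ H.powerset, ((-1:ℤ)^(d-F.card) * (F.card.choose k) * (-1)^(d-H.card)) := by
      rw [← Finset.sum_filter_add_sum_filter_not H.powerset (fun F => F ≠ ∅), hzero, add_zero]
    rw [hfull, ← Finset.sum_mul, aux2 H d k hk1 (hdim.1 H hH)]
    by_cases h : H.card = k
    · rw [if_pos h, if_pos h, h, ← pow_add, show d + k + (d - k) = 2 * d by omega, pow_mul]
      norm_num
    · rw [if_neg h, if_neg h, zero_mul]
  rw [sum_congr rfl hinner, sum_boole, fnum]
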